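/- Under the inclusion Λ³V ↪ V ⊗ Λ²V and the map C: V ⊗ Λ²V → V, C(v ⊗ u∧w) = ω(u,w)v + ω(v,u)w − ω(v,w)u, every element of Λ³V of the form v ∧ ω (i.e. v ⊗ ω plus cyclic terms corresponding to A_3(v ⊗ ω) = ω ∧ v) satisfies C(v ⊗ ω) = (n−1)v, and every f ∈ Λ³V satisfies C²(f) = (n−1)·C(f). -/

import Mathlib

/- Koszul differential A_{p,q} : SᵖV ⊗ Λ^{q-1}V → S^{p-1}V ⊗ ΛᵠV satisfies
   A_{p-1,q+1} ∘ A_{p,q} = 0.  We model the symmetric algebra of V = ℝᵐ as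
   `MvPolynomial (Fin m) ℝ` (products of linear forms are the decomposable
   symmetric tensors) and the exterior algebra by `ExteriorAlgebra`.  The
   (total) Koszul map `A` is any linear map satisfying the defining formula on
   decomposable elements; these span everything, so `A` is the Koszul
   differential and the claim is `A ∘ A = 0`. -/

open TensorProduct

set_option synthInstance.maxHeartbeats 1000000
set_option maxHeartbeats 1000000

noncomputable section

/-- A vector of `ℝᵐ` viewed as a degree-one element of the symmetric algebra. -/
def lin {m : ℕ} (v : Fin m → ℝ) : MvPolynomial (Fin m) ℝ :=
  ∑ i, MvPolynomial.C (v i) * MvPolynomial.X i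

/-- The decomposable symmetric tensor `u 0 ⋯ u (p-1) ∈ SᵖV`. -/
def symProd {m p : ℕ} (u : Fin p → Fin m → ℝ) : MvPolynomial (Fin m) ℝ :=
  ∏ i, lin (u i)

/-- The decomposable alternating tensor `v 0 ∧ ⋯ ∧ v (q-1) ∈ ΛᵠV`. -/
def wdg {m q : ℕ} (v : Fin q → Fin m → ℝ) : ExteriorAlgebra ℝ (Fin m → ℝ) :=
  (List.ofFn fun j => ExteriorAlgebra.ι ℝ (v j)).prod

/-- The model for `⊕_{p,q} SᵖV ⊗ ΛᵠV`. -/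
abbrev MM (m : ℕ) :=
  MvPolynomial (Fin m) ℝ ⊗[ℝ] ExteriorAlgebra ℝ (Fin m → ℝ)

/-- The decomposable element `u 0 ⋯ u (p-1) ⊗ v 0 ∧ ⋯ ∧ v (q-1)` of `SᵖV ⊗ ΛᵠV`. -/
def dec {m p q : ℕ} (u : Fin p → Fin m → ℝ) (v : Fin q → Fin m → ℝ) : MM m :=
  symProd u ⊗ₜ[ℝ] wdg v

/-- The image of the decomposable 3-form `v₁ ∧ v₂ ∧ v₃` under the standard
embedding `Λ³V ↪ V ⊗ Λ²V` (cyclic sum). -/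
def embL3 {m : ℕ} (v₁ v₂ v₃ : Fin m → ℝ) : MM m :=
  (lin v₁) ⊗ₜ[ℝ] (ExteriorAlgebra.ι ℝ v₂ * ExteriorAlgebra.ι ℝ v₃) +
  (lin v₂) ⊗ₜ[ℝ] (ExteriorAlgebra.ι ℝ v₃ * ExteriorAlgebra.ι ℝ v₁) +
  (lin v₃) ⊗ₜ[ℝ] (ExteriorAlgebra.ι ℝ v₁ * ExteriorAlgebra.ι ℝ v₂)

/-- `Λ³V` inside `V ⊗ Λ²V`. -/
def L3 (m : ℕ) : Submodule ℝ (MM m) :=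
  Submodule.span ℝ {x | ∃ v₁ v₂ v₃ : Fin m → ℝ, x = embL3 v₁ v₂ v₃}

/-- With `ω = ∑ᵢ eᵢ ∧ e_{i+n}` the symplectic bivector, `C(v ⊗ ω) = (n−1)v`,
and consequently `C²(f) = (n−1)·C(f)` for every `f ∈ Λ³V` (where `V` is viewed
inside `Λ³V` via `v ↦ v ⊗ ω`). -/
theorem stmt11 (n : ℕ) (hn : 2 ≤ n)
    (ω : (Fin (n + n) → ℝ) →ₗ[ℝ] (Fin (n + n) → ℝ) →ₗ[ℝ] ℝ)
    (halt : ∀ x, ω x x = 0)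
    (hnd : ∀ x, (∀ y, ω x y = 0) → x = 0)
    (e : Fin (n + n) → Fin (n + n) → ℝ)
    (hb : ∃ b : Module.Basis (Fin (n + n)) ℝ (Fin (n + n) → ℝ), ⇑b = e)
    (hee : ∀ i j : Fin n, ω (e (Fin.castAdd n i)) (e (Fin.castAdd n j)) = 0)
    (hef : ∀ i j : Fin n, ω (e (Fin.castAdd n i)) (e (Fin.natAdd n j)) =
      if i = j then 1 else 0)
    (hff : ∀ i j : Fin n, ω (e (Fin.natAdd n i)) (e (Fin.natAdd n j)) = 0)
    (C : MM (n + n) →ₗ[ℝ] (Fin (n + n) → ℝ))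
    (hC : ∀ v u w : Fin (n + n) → ℝ,
      C ((lin v) ⊗ₜ[ℝ] (ExteriorAlgebra.ι ℝ u * ExteriorAlgebra.ι ℝ w)) =
        ω u w • v + ω v u • w - ω v w • u) :
    (∀ v : Fin (n + n) → ℝ,
      C ((lin v) ⊗ₜ[ℝ] ∑ i : Fin n,
          ExteriorAlgebra.ι ℝ (e (Fin.castAdd n i)) *
            ExteriorAlgebra.ι ℝ (e (Fin.natAdd n i))) = ((n : ℝ) - 1) • v) ∧
    (∀ f ∈ L3 (n + n),
      C ((lin (C f)) ⊗ₜ[ℝ] ∑ i : Fin n,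
          ExteriorAlgebra.ι ℝ (e (Fin.castAdd n i)) *
            ExteriorAlgebra.ι ℝ (e (Fin.natAdd n i))) = ((n : ℝ) - 1) • C f) := by
  obtain ⟨b, hbe⟩ := hb
  have hanti : ∀ x y, ω x y = - ω y x := by
    intro x y
    have := halt (x + y)
    simp [map_add, halt] at this
    linarith
  simp only [Fin.natAdd_eq_addNat] at hef hff ⊢
  have hfe : ∀ i j : Fin n, ω (e (Fin.addNat i n)) (e (Fin.castAdd n j)) =
      - if j = i then 1 else 0 := by
    intro i j; rw [hanti, hef]
  have hrepr : ∀ v : Fin (n + n) → ℝ, v = ∑ k, b.repr v k • e k := by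
    intro v
    conv_lhs => rw [← b.sum_repr v]
    simp [hbe]
  have hω : ∀ (v x : Fin (n+n) → ℝ), ω v x = ∑ k, b.repr v k * ω (e k) x := by
    intro v x
    conv_lhs => rw [hrepr v]
    rw [map_sum]
    simp
  have h1 : ∀ (v : Fin (n+n) → ℝ) (j : Fin n),
      ω v (e (Fin.castAdd n j)) = - b.repr v (Fin.addNat j n) := by
    intro v j
    rw [hω, Fin.sum_univ_add]
    simp [hee, hfe, Finset.mul_sum]
  have h2 : ∀ (v : Fin (n+n) → ℝ) (j : Fin n),
      ω v (e (Fin.addNat j n)) = b.repr v (Fin.castAdd n j) := by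
    intro v j
    rw [hω, Fin.sum_univ_add]
    simp [hff, hef, Finset.mul_sum]
  have key : ∀ v : Fin (n + n) → ℝ,
      C ((lin v) ⊗ₜ[ℝ] ∑ i : Fin n,
          ExteriorAlgebra.ι ℝ (e (Fin.castAdd n i)) *
            ExteriorAlgebra.ι ℝ (e (Fin.addNat i n))) = ((n : ℝ) - 1) • v := by
    intro v
    rw [TensorProduct.tmul_sum, map_sum]
    have hterm : ∀ i : Fin n,
        C (lin v ⊗ₜ[ℝ] (ExteriorAlgebra.ι ℝ (e (Fin.castAdd n i)) *
            ExteriorAlgebra.ι ℝ (e (Fin.addNat i n)))) =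
          v + (- b.repr v (Fin.addNat i n) • e (Fin.addNat i n)
              - b.repr v (Fin.castAdd n i) • e (Fin.castAdd n i)) := by
      intro i
      rw [hC, hef, if_pos rfl, h1, h2, one_smul]
      abel
    rw [Finset.sum_congr rfl (fun i _ => hterm i), Finset.sum_add_distrib,
      Finset.sum_const, Finset.card_univ, Fintype.card_fin]
    have hv2 : ∑ i : Fin n, (- b.repr v (Fin.addNat i n) • e (Fin.addNat i n)
        - b.repr v (Fin.castAdd n i) • e (Fin.castAdd n i)) = -v := by
      have := hrepr v
      rw [Fin.sum_univ_add] at this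
      simp only [Fin.natAdd_eq_addNat] at this
      rw [Finset.sum_sub_distrib]
      simp only [neg_smul]
      conv_rhs => rw [this]
      rw [Finset.sum_neg_distrib]
      abel
    rw [hv2, ← Nat.cast_smul_eq_nsmul ℝ, sub_smul, one_smul]
    abel
  exact ⟨key, fun f _ => key (C f)⟩
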